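/- There exists a finite constant L, depending only on a₁, a₂ and k₀, such that |φ − ψ| ≤ L·|ρ(φ) − ρ(ψ)| for all φ, ψ > 0. That is, the fugacity φ(ρ), viewed as the inverse of the strictly increasing density map φ ↦ ρ(φ), is a Lipschitz (and strictly increasing) function of the density. -/

import Mathlib

noncomputable section

/-- `c(k)! = ∏_{m=1}^k c(m)`, with `c(0)! = 1`. -/
def cfact (c : ℕ → ℝ) : ℕ → ℝ
  | 0 => 1
  | k + 1 => cfact c k * c (k + 1)

/-- The partition function `Z(φ) = ∑_{k ≥ 0} φ^k / c(k)!`. -/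
def Zfun (c : ℕ → ℝ) (φ : ℝ) : ℝ := ∑' k : ℕ, φ ^ k / cfact c k

/-- The grand canonical single-site measure `μ_φ({k}) = φ^k / (Z(φ) c(k)!)`. -/
def mu (c : ℕ → ℝ) (φ : ℝ) (k : ℕ) : ℝ := φ ^ k / (Zfun c φ * cfact c k)

/-- The mean `ρ(φ)` of `μ_φ`. -/
def rho (c : ℕ → ℝ) (φ : ℝ) : ℝ := ∑' k : ℕ, (k : ℝ) * mu c φ k

section Aux

variable {c : ℕ → ℝ} {a₁ a₂ : ℝ} {k₀ : ℕ}

lemma cfact_pos (hpos : ∀ k : ℕ, 1 ≤ k → 0 < c k) : ∀ k, 0 < cfact c k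
  | 0 => one_pos
  | k + 1 => mul_pos (cfact_pos hpos k) (hpos (k + 1) (by omega))

lemma c_nonneg (h0 : c 0 = 0) (hpos : ∀ k : ℕ, 1 ≤ k → 0 < c k) (k : ℕ) : 0 ≤ c k := by
  cases k with
  | zero => simp [h0]
  | succ n => exact (hpos (n + 1) (by omega)).le

lemma c_lip (hb : ∀ k : ℕ, |c (k + 1) - c k| ≤ a₁) :
    ∀ j m : ℕ, |c (j + m) - c j| ≤ a₁ * m := by
  intro j m
  induction m with
  | zero => simp
  | succ n ih =>
    have h1 : |c (j + n + 1) - c (j + n)| ≤ a₁ := hb (j + n)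
    calc |c (j + (n + 1)) - c j|
        = |(c (j + n + 1) - c (j + n)) + (c (j + n) - c j)| := by ring_nf
      _ ≤ |c (j + n + 1) - c (j + n)| + |c (j + n) - c j| := abs_add_le _ _
      _ ≤ a₁ + a₁ * n := add_le_add h1 ih
      _ = a₁ * ((n:ℝ) + 1) := by ring
      _ = a₁ * ((n + 1 : ℕ) : ℝ) := by push_cast; ring
    
lemma c_grow (h0 : c 0 = 0) (hpos : ∀ k : ℕ, 1 ≤ k → 0 < c k) (hk₀ : 1 ≤ k₀)
    (hM : ∀ k : ℕ, a₂ ≤ c (k + k₀) - c k) : ∀ k : ℕ, a₂ * (k / k₀ : ℕ) ≤ c k := by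
  intro k
  induction k using Nat.strong_induction_on with
  | _ k ih =>
    by_cases hk : k < k₀
    · rw [Nat.div_eq_of_lt hk]
      simpa using c_nonneg h0 hpos k
    · push_neg at hk
      have hm : k - k₀ + k₀ = k := Nat.sub_add_cancel hk
      have h1 : a₂ * ((k - k₀) / k₀ : ℕ) ≤ c (k - k₀) := ih (k - k₀) (by omega)
      have h2 : a₂ ≤ c (k - k₀ + k₀) - c (k - k₀) := hM (k - k₀)
      have h3 : (k - k₀) / k₀ + 1 = k / k₀ := by
        conv_rhs => rw [← hm]
        rw [Nat.add_div_right _ (by omega)]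
      rw [← h3]
      push_cast
      rw [hm] at h2
      nlinarith
end Aux
section Aux2

variable {c : ℕ → ℝ} {a₁ a₂ : ℝ} {k₀ : ℕ}

lemma c_large (h0 : c 0 = 0) (hpos : ∀ k : ℕ, 1 ≤ k → 0 < c k) (hk₀ : 1 ≤ k₀)
    (ha₂ : 0 < a₂) (hM : ∀ k : ℕ, a₂ ≤ c (k + k₀) - c k) (M : ℝ) :
    ∃ N : ℕ, ∀ k ≥ N, M ≤ c k := by
  obtain ⟨n, hn⟩ := exists_nat_ge (M / a₂)
  refine ⟨n * k₀, fun k hk => ?_⟩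
  have h1 : n ≤ k / k₀ := (Nat.le_div_iff_mul_le (by omega)).2 hk
  have h2 : a₂ * (k / k₀ : ℕ) ≤ c k := c_grow h0 hpos hk₀ hM k
  have h3 : M ≤ a₂ * n := by
    rw [div_le_iff₀ ha₂] at hn; linarith [hn]
  have h4 : (n : ℝ) ≤ (k / k₀ : ℕ) := by exact_mod_cast h1
  nlinarith

lemma summable_master (h0 : c 0 = 0) (hpos : ∀ k : ℕ, 1 ≤ k → 0 < c k) (hk₀ : 1 ≤ k₀)
    (ha₂ : 0 < a₂) (hM : ∀ k : ℕ, a₂ ≤ c (k + k₀) - c k) {x : ℝ} (hx : 0 < x) :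
    Summable (fun k : ℕ => ((k : ℝ) + 1) * x ^ k / cfact c k) := by
  obtain ⟨N, hN⟩ := c_large h0 hpos hk₀ ha₂ hM (4 * x)
  apply summable_of_ratio_norm_eventually_le (r := 1/2) (by norm_num)
  filter_upwards [Filter.eventually_ge_atTop N] with k hk
  have hF : 0 < cfact c k := cfact_pos hpos k
  have hC : 0 < c (k + 1) := hpos (k + 1) (by omega)
  have hC4 : 4 * x ≤ c (k + 1) := hN (k + 1) (by omega)
  have hX : 0 < x ^ k := pow_pos hx k
  have h1 : 0 < ((k : ℝ) + 1) * x ^ k / cfact c k := by positivity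
  have h2 : 0 < ((k : ℝ) + 1 + 1) * x ^ (k + 1) / cfact c (k + 1) := by
    have : 0 < cfact c (k + 1) := cfact_pos hpos (k + 1)
    positivity
  simp only [Real.norm_eq_abs]
  push_cast
  rw [abs_of_pos h2, abs_of_pos h1]
  have hstep : (1:ℝ)/2 * (((k:ℝ)+1) * x ^ k / cfact c k)
      = ((k:ℝ)+1) * x ^ k / (2 * cfact c k) := by ring
  rw [hstep, div_le_div_iff₀ (cfact_pos hpos (k+1)) (by linarith)]
  rw [show cfact c (k + 1) = cfact c k * c (k + 1) from rfl, pow_succ]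
  have key : 2 * ((k:ℝ)+1+1) * x ≤ ((k:ℝ)+1) * c (k+1) := by
    nlinarith [Nat.cast_nonneg (α := ℝ) k]
  nlinarith [mul_le_mul_of_nonneg_right key (mul_nonneg hX.le hF.le)]

lemma summable_f (h0 : c 0 = 0) (hpos : ∀ k : ℕ, 1 ≤ k → 0 < c k) (hk₀ : 1 ≤ k₀)
    (ha₂ : 0 < a₂) (hM : ∀ k : ℕ, a₂ ≤ c (k + k₀) - c k) {x : ℝ} (hx : 0 < x) :
    Summable (fun k : ℕ => x ^ k / cfact c k) := by
  refine Summable.of_nonneg_of_le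
    (fun k => div_nonneg (pow_pos hx k).le (cfact_pos hpos k).le)
    (fun k => ?_) (summable_master h0 hpos hk₀ ha₂ hM hx)
  have hF : 0 < cfact c k := cfact_pos hpos k
  have hX : 0 < x ^ k := pow_pos hx k
  rw [mul_div_assoc]
  have h1 : (1 : ℝ) ≤ (k : ℝ) + 1 := by linarith [Nat.cast_nonneg (α := ℝ) k]
  nlinarith [div_nonneg hX.le hF.le]

lemma summable_kf (h0 : c 0 = 0) (hpos : ∀ k : ℕ, 1 ≤ k → 0 < c k) (hk₀ : 1 ≤ k₀)
    (ha₂ : 0 < a₂) (hM : ∀ k : ℕ, a₂ ≤ c (k + k₀) - c k) {x : ℝ} (hx : 0 < x) :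
    Summable (fun k : ℕ => (k : ℝ) * (x ^ k / cfact c k)) := by
  refine Summable.of_nonneg_of_le
    (fun k => mul_nonneg (Nat.cast_nonneg k) (div_nonneg (pow_pos hx k).le (cfact_pos hpos k).le))
    (fun k => ?_) (summable_master h0 hpos hk₀ ha₂ hM hx)
  have hF : 0 < cfact c k := cfact_pos hpos k
  have hX : 0 < x ^ k := pow_pos hx k
  rw [mul_div_assoc]
  exact mul_le_mul_of_nonneg_right (by linarith) (div_nonneg hX.le hF.le)

lemma summable_cf (h0 : c 0 = 0) (hpos : ∀ k : ℕ, 1 ≤ k → 0 < c k) (hk₀ : 1 ≤ k₀)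
    (ha₂ : 0 < a₂) (hb : ∀ k : ℕ, |c (k + 1) - c k| ≤ a₁)
    (hM : ∀ k : ℕ, a₂ ≤ c (k + k₀) - c k) {x : ℝ} (hx : 0 < x) :
    Summable (fun k : ℕ => c k * (x ^ k / cfact c k)) := by
  have ha₁ : 0 ≤ a₁ := le_trans (abs_nonneg _) (hb 0)
  have hck : ∀ k : ℕ, c k ≤ a₁ * k := by
    intro k
    have := c_lip hb 0 k
    rw [zero_add, h0, sub_zero] at this
    exact le_trans (le_abs_self _) this
  refine Summable.of_nonneg_of_le
    (fun k => mul_nonneg (c_nonneg h0 hpos k)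
      (div_nonneg (pow_pos hx k).le (cfact_pos hpos k).le)) (fun k => ?_)
    (((summable_master h0 hpos hk₀ ha₂ hM hx).mul_left (a₁ + 1)))
  have hF : 0 < cfact c k := cfact_pos hpos k
  have hX : 0 < x ^ k := pow_pos hx k
  have h1 : c k ≤ (a₁ + 1) * ((k : ℝ) + 1) := by
    have := hck k
    nlinarith [Nat.cast_nonneg (α := ℝ) k]
  calc c k * (x ^ k / cfact c k) ≤ ((a₁ + 1) * ((k : ℝ) + 1)) * (x ^ k / cfact c k) :=
        mul_le_mul_of_nonneg_right h1 (div_nonneg hX.le hF.le)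
    _ = (a₁ + 1) * (((k : ℝ) + 1) * x ^ k / cfact c k) := by ring

lemma Zfun_pos (h0 : c 0 = 0) (hpos : ∀ k : ℕ, 1 ≤ k → 0 < c k) (hk₀ : 1 ≤ k₀)
    (ha₂ : 0 < a₂) (hM : ∀ k : ℕ, a₂ ≤ c (k + k₀) - c k) {x : ℝ} (hx : 0 < x) :
    0 < Zfun c x := by
  refine Summable.tsum_pos (summable_f h0 hpos hk₀ ha₂ hM hx)
    (fun k => div_nonneg (pow_pos hx k).le (cfact_pos hpos k).le) 0 ?_
  simp [cfact]

lemma csum_eq (h0 : c 0 = 0) (hpos : ∀ k : ℕ, 1 ≤ k → 0 < c k) (hk₀ : 1 ≤ k₀)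
    (ha₂ : 0 < a₂) (hb : ∀ k : ℕ, |c (k + 1) - c k| ≤ a₁)
    (hM : ∀ k : ℕ, a₂ ≤ c (k + k₀) - c k) {x : ℝ} (hx : 0 < x) :
    ∑' k : ℕ, c k * (x ^ k / cfact c k) = x * Zfun c x := by
  rw [Summable.tsum_eq_zero_add (summable_cf h0 hpos hk₀ ha₂ hb hM hx), h0, zero_mul, zero_add]
  have hterm : ∀ j : ℕ, c (j + 1) * (x ^ (j + 1) / cfact c (j + 1))
      = x * (x ^ j / cfact c j) := by
    intro j
    have hF : cfact c j ≠ 0 := (cfact_pos hpos j).ne'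
    have hC : c (j + 1) ≠ 0 := (hpos (j + 1) (by omega)).ne'
    rw [show cfact c (j + 1) = cfact c j * c (j + 1) from rfl, pow_succ]
    field_simp
  simp_rw [hterm]
  rw [tsum_mul_left, Zfun]

lemma rho_eq (h0 : c 0 = 0) (hpos : ∀ k : ℕ, 1 ≤ k → 0 < c k) (hk₀ : 1 ≤ k₀)
    (ha₂ : 0 < a₂) (hM : ∀ k : ℕ, a₂ ≤ c (k + k₀) - c k) {x : ℝ} (hx : 0 < x) :
    rho c x = (∑' k : ℕ, (k : ℝ) * (x ^ k / cfact c k)) / Zfun c x := by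
  have hZ : Zfun c x ≠ 0 := (Zfun_pos h0 hpos hk₀ ha₂ hM hx).ne'
  have key : ∀ (a b z f : ℝ), f ≠ 0 → z ≠ 0 → a * (b / (z * f)) = (a * (b / f)) / z := by
    intro a b z f hf hz
    rw [← mul_div_assoc, ← mul_div_assoc, div_div, mul_comm z f]
  rw [rho, ← tsum_div_const]
  congr 1 with k
  rw [mu]
  exact key _ _ _ _ (cfact_pos hpos k).ne' hZ

end Aux2
section Main

variable {c : ℕ → ℝ} {a₁ a₂ : ℝ} {k₀ : ℕ}

lemma key_ineq (h0 : c 0 = 0) (hpos : ∀ k : ℕ, 1 ≤ k → 0 < c k) (hk₀ : 1 ≤ k₀)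
    (ha₂ : 0 < a₂) (hb : ∀ k : ℕ, |c (k + 1) - c k| ≤ a₁)
    (hM : ∀ k : ℕ, a₂ ≤ c (k + k₀) - c k) {φ ψ : ℝ} (hψ : 0 < ψ) (hle : ψ ≤ φ) :
    rho c ψ ≤ rho c φ ∧ φ - ψ ≤ a₁ * (rho c φ - rho c ψ) := by
  have hφ : 0 < φ := lt_of_lt_of_le hψ hle
  set fφ : ℕ → ℝ := fun k => φ ^ k / cfact c k with hfφ
  set fψ : ℕ → ℝ := fun k => ψ ^ k / cfact c k with hfψ
  have hfφnn : ∀ k, 0 ≤ fφ k := fun k =>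
    div_nonneg (pow_pos hφ k).le (cfact_pos hpos k).le
  have hfψnn : ∀ k, 0 ≤ fψ k := fun k =>
    div_nonneg (pow_pos hψ k).le (cfact_pos hpos k).le
  have sφ : Summable fφ := summable_f h0 hpos hk₀ ha₂ hM hφ
  have sψ : Summable fψ := summable_f h0 hpos hk₀ ha₂ hM hψ
  have skφ : Summable (fun k : ℕ => (k : ℝ) * fφ k) := summable_kf h0 hpos hk₀ ha₂ hM hφ
  have skψ : Summable (fun k : ℕ => (k : ℝ) * fψ k) := summable_kf h0 hpos hk₀ ha₂ hM hψ
  have scφ : Summable (fun k : ℕ => c k * fφ k) := summable_cf h0 hpos hk₀ ha₂ hb hM hφ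
  have scψ : Summable (fun k : ℕ => c k * fψ k) := summable_cf h0 hpos hk₀ ha₂ hb hM hψ
  have hkφnn : ∀ k : ℕ, 0 ≤ (k : ℝ) * fφ k := fun k => mul_nonneg (Nat.cast_nonneg k) (hfφnn k)
  have hkψnn : ∀ k : ℕ, 0 ≤ (k : ℝ) * fψ k := fun k => mul_nonneg (Nat.cast_nonneg k) (hfψnn k)
  have hcφnn : ∀ k : ℕ, 0 ≤ c k * fφ k := fun k => mul_nonneg (c_nonneg h0 hpos k) (hfφnn k)
  have hcψnn : ∀ k : ℕ, 0 ≤ c k * fψ k := fun k => mul_nonneg (c_nonneg h0 hpos k) (hfψnn k)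
  obtain ⟨Zφ, hZφsum⟩ := sφ
  obtain ⟨Zψ, hZψsum⟩ := sψ
  obtain ⟨Sφ, hSφsum⟩ := skφ
  obtain ⟨Sψ, hSψsum⟩ := skψ
  have hZφeq : Zfun c φ = Zφ := hZφsum.tsum_eq
  have hZψeq : Zfun c ψ = Zψ := hZψsum.tsum_eq
  have hZφ : 0 < Zφ := hZφeq ▸ Zfun_pos h0 hpos hk₀ ha₂ hM hφ
  have hZψ : 0 < Zψ := hZψeq ▸ Zfun_pos h0 hpos hk₀ ha₂ hM hψ
  have hCφ : HasSum (fun k : ℕ => c k * fφ k) (φ * Zφ) := by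
    have h1 : (∑' k : ℕ, c k * fφ k) = φ * Zφ := by
      rw [← hZφeq]; exact csum_eq h0 hpos hk₀ ha₂ hb hM hφ
    exact h1 ▸ scφ.hasSum
  have hCψ : HasSum (fun k : ℕ => c k * fψ k) (ψ * Zψ) := by
    have h1 : (∑' k : ℕ, c k * fψ k) = ψ * Zψ := by
      rw [← hZψeq]; exact csum_eq h0 hpos hk₀ ha₂ hb hM hψ
    exact h1 ▸ scψ.hasSum
  have sφ : Summable fφ := hZφsum.summable
  have sψ : Summable fψ := hZψsum.summable
  have skφ : Summable (fun k : ℕ => (k : ℝ) * fφ k) := hSφsum.summable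
  have skψ : Summable (fun k : ℕ => (k : ℝ) * fψ k) := hSψsum.summable
  -- product HasSums
  have hs1 : HasSum (fun p : ℕ × ℕ => ((p.1 : ℝ) * fφ p.1) * fψ p.2) (Sφ * Zψ) :=
    HasSum.mul (f := fun k : ℕ => (k : ℝ) * fφ k) (g := fψ) hSφsum hZψsum
      (Summable.mul_of_nonneg (f := fun k : ℕ => (k : ℝ) * fφ k) (g := fψ) skφ sψ hkφnn hfψnn)
  have hs2 : HasSum (fun p : ℕ × ℕ => ((p.1 : ℝ) * fψ p.1) * fφ p.2) (Sψ * Zφ) :=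
    HasSum.mul (f := fun k : ℕ => (k : ℝ) * fψ k) (g := fφ) hSψsum hZφsum
      (Summable.mul_of_nonneg (f := fun k : ℕ => (k : ℝ) * fψ k) (g := fφ) skψ sφ hkψnn hfφnn)
  have hs3 : HasSum (fun p : ℕ × ℕ => fφ p.1 * ((p.2 : ℝ) * fψ p.2)) (Zφ * Sψ) :=
    HasSum.mul (f := fφ) (g := fun k : ℕ => (k : ℝ) * fψ k) hZφsum hSψsum
      (Summable.mul_of_nonneg (f := fφ) (g := fun k : ℕ => (k : ℝ) * fψ k) sφ skψ hfφnn hkψnn)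
  have hs4 : HasSum (fun p : ℕ × ℕ => fψ p.1 * ((p.2 : ℝ) * fφ p.2)) (Zψ * Sφ) :=
    HasSum.mul (f := fψ) (g := fun k : ℕ => (k : ℝ) * fφ k) hZψsum hSφsum
      (Summable.mul_of_nonneg (f := fψ) (g := fun k : ℕ => (k : ℝ) * fφ k) sψ skφ hfψnn hkφnn)
  have hc1 : HasSum (fun p : ℕ × ℕ => (c p.1 * fφ p.1) * fψ p.2) ((φ * Zφ) * Zψ) :=
    HasSum.mul (f := fun k : ℕ => c k * fφ k) (g := fψ) hCφ hZψsum
      (Summable.mul_of_nonneg (f := fun k : ℕ => c k * fφ k) (g := fψ) scφ sψ hcφnn hfψnn)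
  have hc2 : HasSum (fun p : ℕ × ℕ => (c p.1 * fψ p.1) * fφ p.2) ((ψ * Zψ) * Zφ) :=
    HasSum.mul (f := fun k : ℕ => c k * fψ k) (g := fφ) hCψ hZφsum
      (Summable.mul_of_nonneg (f := fun k : ℕ => c k * fψ k) (g := fφ) scψ sφ hcψnn hfφnn)
  have hc3 : HasSum (fun p : ℕ × ℕ => fφ p.1 * (c p.2 * fψ p.2)) (Zφ * (ψ * Zψ)) :=
    HasSum.mul (f := fφ) (g := fun k : ℕ => c k * fψ k) hZφsum hCψ
      (Summable.mul_of_nonneg (f := fφ) (g := fun k : ℕ => c k * fψ k) sφ scψ hfφnn hcψnn)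
  have hc4 : HasSum (fun p : ℕ × ℕ => fψ p.1 * (c p.2 * fφ p.2)) (Zψ * (φ * Zφ)) :=
    HasSum.mul (f := fψ) (g := fun k : ℕ => c k * fφ k) hZψsum hCφ
      (Summable.mul_of_nonneg (f := fψ) (g := fun k : ℕ => c k * fφ k) sψ scφ hfψnn hcφnn)
  -- the two symmetrized double sums
  have hT : HasSum (fun p : ℕ × ℕ =>
      ((p.1 : ℝ) - p.2) * (fφ p.1 * fψ p.2 - fψ p.1 * fφ p.2))
      ((Sφ * Zψ - Sψ * Zφ) - (Zφ * Sψ - Zψ * Sφ)) := by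
    have h := (hs1.sub hs2).sub (hs3.sub hs4)
    have hfun : (fun p : ℕ × ℕ =>
        ((p.1 : ℝ) - p.2) * (fφ p.1 * fψ p.2 - fψ p.1 * fφ p.2)) =
        fun p : ℕ × ℕ => (((p.1 : ℝ) * fφ p.1) * fψ p.2 - ((p.1 : ℝ) * fψ p.1) * fφ p.2)
          - (fφ p.1 * ((p.2 : ℝ) * fψ p.2) - fψ p.1 * ((p.2 : ℝ) * fφ p.2)) := by
      funext p; ring
    rw [hfun]; exact h
  have hU : HasSum (fun p : ℕ × ℕ =>
      (c p.1 - c p.2) * (fφ p.1 * fψ p.2 - fψ p.1 * fφ p.2))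
      (((φ * Zφ) * Zψ - (ψ * Zψ) * Zφ) - (Zφ * (ψ * Zψ) - Zψ * (φ * Zφ))) := by
    have h := (hc1.sub hc2).sub (hc3.sub hc4)
    have hfun : (fun p : ℕ × ℕ =>
        (c p.1 - c p.2) * (fφ p.1 * fψ p.2 - fψ p.1 * fφ p.2)) =
        fun p : ℕ × ℕ => ((c p.1 * fφ p.1) * fψ p.2 - (c p.1 * fψ p.1) * fφ p.2)
          - (fφ p.1 * (c p.2 * fψ p.2) - fψ p.1 * (c p.2 * fφ p.2)) := by
      funext p; ring
    rw [hfun]; exact h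
  -- pointwise estimates
  have main : ∀ j k : ℕ, k ≤ j →
      0 ≤ ((j : ℝ) - k) * (fφ j * fψ k - fψ j * fφ k) ∧
      (c j - c k) * (fφ j * fψ k - fψ j * fφ k) ≤
        a₁ * (((j : ℝ) - k) * (fφ j * fψ k - fψ j * fφ k)) := by
    intro j k hkj
    obtain ⟨m, rfl⟩ := Nat.exists_eq_add_of_le hkj
    have hFj : 0 < cfact c (k + m) := cfact_pos hpos (k + m)
    have hFk : 0 < cfact c k := cfact_pos hpos k
    have hD : fφ (k + m) * fψ k - fψ (k + m) * fφ k
        = (φ ^ k * ψ ^ k * (φ ^ m - ψ ^ m)) / (cfact c (k + m) * cfact c k) := by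
      simp only [hfφ, hfψ]
      rw [pow_add, pow_add]
      field_simp
    have hpow : ψ ^ m ≤ φ ^ m := pow_le_pow_left₀ hψ.le hle m
    have hDnn : 0 ≤ fφ (k + m) * fψ k - fψ (k + m) * fφ k := by
      rw [hD]
      apply div_nonneg _ (mul_pos hFj hFk).le
      have : (0:ℝ) ≤ φ ^ k * ψ ^ k := by positivity
      nlinarith
    have hjk : (0 : ℝ) ≤ ((k + m : ℕ) : ℝ) - (k : ℕ) := by
      push_cast; linarith [Nat.cast_nonneg (α := ℝ) m]
    refine ⟨mul_nonneg hjk hDnn, ?_⟩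
    have hc : c (k + m) - c k ≤ a₁ * (((k + m : ℕ) : ℝ) - (k : ℕ)) := by
      have h1 := le_trans (le_abs_self _) (c_lip hb k m)
      push_cast
      calc c (k + m) - c k ≤ a₁ * m := h1
        _ = a₁ * ((k : ℝ) + m - k) := by ring
    calc (c (k + m) - c k) * (fφ (k + m) * fψ k - fψ (k + m) * fφ k)
        ≤ (a₁ * (((k + m : ℕ) : ℝ) - (k : ℕ))) * (fφ (k + m) * fψ k - fψ (k + m) * fφ k) :=
          mul_le_mul_of_nonneg_right hc hDnn
      _ = a₁ * ((((k + m : ℕ) : ℝ) - (k : ℕ)) * (fφ (k + m) * fψ k - fψ (k + m) * fφ k)) := by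
          ring
  have hsign : ∀ p : ℕ × ℕ,
      0 ≤ ((p.1 : ℝ) - p.2) * (fφ p.1 * fψ p.2 - fψ p.1 * fφ p.2) ∧
      (c p.1 - c p.2) * (fφ p.1 * fψ p.2 - fψ p.1 * fφ p.2) ≤
        a₁ * (((p.1 : ℝ) - p.2) * (fφ p.1 * fψ p.2 - fψ p.1 * fφ p.2)) := by
    rintro ⟨j, k⟩
    rcases le_total k j with h | h
    · exact main j k h
    · obtain ⟨h1, h2⟩ := main k j h
      constructor
      · have e : ((j : ℝ) - k) * (fφ j * fψ k - fψ j * fφ k)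
            = ((k : ℝ) - j) * (fφ k * fψ j - fψ k * fφ j) := by ring
        rw [e]; exact h1
      · have e1 : (c j - c k) * (fφ j * fψ k - fψ j * fφ k)
            = (c k - c j) * (fφ k * fψ j - fψ k * fφ j) := by ring
        have e2 : a₁ * (((j : ℝ) - k) * (fφ j * fψ k - fψ j * fφ k))
            = a₁ * (((k : ℝ) - j) * (fφ k * fψ j - fψ k * fφ j)) := by ring
        rw [e1, e2]; exact h2
  -- conclude
  have hTnn : 0 ≤ (Sφ * Zψ - Sψ * Zφ) - (Zφ * Sψ - Zψ * Sφ) := by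
    rw [← hT.tsum_eq]
    exact tsum_nonneg fun p => (hsign p).1
  have hUleT : ((φ * Zφ) * Zψ - (ψ * Zψ) * Zφ) - (Zφ * (ψ * Zψ) - Zψ * (φ * Zφ))
      ≤ a₁ * ((Sφ * Zψ - Sψ * Zφ) - (Zφ * Sψ - Zψ * Sφ)) := by
    rw [← hT.tsum_eq, ← hU.tsum_eq, ← tsum_mul_left]
    exact Summable.tsum_le_tsum (fun p => (hsign p).2) hU.summable (hT.summable.mul_left a₁)
  have hrhoφ : rho c φ = Sφ / Zφ := by
    rw [rho_eq h0 hpos hk₀ ha₂ hM hφ, hZφeq]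
    congr 1
    exact hSφsum.tsum_eq
  have hrhoψ : rho c ψ = Sψ / Zψ := by
    rw [rho_eq h0 hpos hk₀ ha₂ hM hψ, hZψeq]
    congr 1
    exact hSψsum.tsum_eq
  have hdiff : rho c φ - rho c ψ = (Sφ * Zψ - Sψ * Zφ) / (Zφ * Zψ) := by
    rw [hrhoφ, hrhoψ, div_sub_div _ _ hZφ.ne' hZψ.ne']
    ring_nf
  constructor
  · rw [hrhoφ, hrhoψ, div_le_div_iff₀ hZψ hZφ]
    nlinarith
  · have h1 : (φ - ψ) * (Zφ * Zψ) ≤ a₁ * (Sφ * Zψ - Sψ * Zφ) := by nlinarith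
    rw [hdiff, ← mul_div_assoc, le_div_iff₀ (mul_pos hZφ hZψ)]
    exact h1


/-- There is a finite constant `L`, depending only on `a₁`, `a₂`, `k₀`,
such that `|φ − ψ| ≤ L·|ρ(φ) − ρ(ψ)|` for all `φ, ψ > 0`: the fugacity `φ(ρ)`, the inverse
of the strictly increasing density map `φ ↦ ρ(φ)`, is a Lipschitz function of the density. -/
theorem stmt9 (a₁ a₂ : ℝ) (k₀ : ℕ) (hk₀ : 1 ≤ k₀) (ha₂ : 0 < a₂) :
    ∃ L : ℝ, ∀ c : ℕ → ℝ, c 0 = 0 → (∀ k : ℕ, 1 ≤ k → 0 < c k) →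
      (∀ k : ℕ, |c (k + 1) - c k| ≤ a₁) →
      (∀ k : ℕ, a₂ ≤ c (k + k₀) - c k) →
      ∀ φ ψ : ℝ, 0 < φ → 0 < ψ →
        |φ - ψ| ≤ L * |rho c φ - rho c ψ| := by
  refine ⟨a₁, fun c h0 hpos hb hM φ ψ hφ hψ => ?_⟩
  rcases le_total ψ φ with h | h
  · obtain ⟨h1, h2⟩ := key_ineq h0 hpos hk₀ ha₂ hb hM hψ h
    rw [abs_of_nonneg (sub_nonneg.2 h), abs_of_nonneg (sub_nonneg.2 h1)]
    exact h2
  · obtain ⟨h1, h2⟩ := key_ineq h0 hpos hk₀ ha₂ hb hM hφ h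
    rw [abs_sub_comm φ ψ, abs_sub_comm (rho c φ) (rho c ψ),
      abs_of_nonneg (sub_nonneg.2 h), abs_of_nonneg (sub_nonneg.2 h1)]
    exact h2
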